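/- (Proposition: global 𝒦∞ modulus of continuity on a compact set.) Let C ⊆ D ⊆ ℝ^m with C compact and D closed, and let V : D → ℝ^p be continuous. Then there exists a function α of class 𝒦∞ such that ‖V(x) − V(y)‖ ≤ α(‖x − y‖) for all x ∈ C and y ∈ D. -/

import Mathlib

noncomputable section

abbrev Vec (n : ℕ) : Type := EuclideanSpace ℝ (Fin n)

/-- Class 𝒦 functions `[0,∞) → [0,∞)`. -/
def IsClassK (φ : ℝ → ℝ) : Prop :=
  ContinuousOn φ (Set.Ici 0) ∧ StrictMonoOn φ (Set.Ici 0) ∧ φ 0 = 0 ∧ ∀ t, 0 ≤ t → 0 ≤ φ t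

/-- Class 𝒦∞ functions. -/
def IsClassKInf (φ : ℝ → ℝ) : Prop :=
  IsClassK φ ∧ Filter.Tendsto φ Filter.atTop Filter.atTop

open Set Metric MeasureTheory intervalIntegral Filter

/-- **Global 𝒦∞ modulus of continuity on a compact set (Proposition 20 of
Allan et al., as used in the paper).** -/
theorem kinf_modulus_of_continuity
    {m p : ℕ} (C D : Set (Vec m)) (hCD : C ⊆ D) (hC : IsCompact C) (hD : IsClosed D)
    (V : Vec m → Vec p) (hV : ContinuousOn V D) :
    ∃ α : ℝ → ℝ, IsClassKInf α ∧ ∀ x ∈ C, ∀ y ∈ D, ‖V x - V y‖ ≤ α ‖x - y‖ := by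
  classical
  set f : Vec m × Vec m → ℝ := fun q => ‖V q.1 - V q.2‖ with hf
  set K : ℝ → Set (Vec m × Vec m) :=
    fun r => {q | q.1 ∈ C ∧ q.2 ∈ D ∧ ‖q.1 - q.2‖ ≤ r} with hK
  set ω : ℝ → ℝ := fun r => sSup (f '' K r) with hωdef
  -- compactness of K r
  have hKclosed : ∀ r, IsClosed (K r) := by
    intro r
    have h1 : IsClosed {q : Vec m × Vec m | q.1 ∈ C} := hC.isClosed.preimage continuous_fst
    have h2 : IsClosed {q : Vec m × Vec m | q.2 ∈ D} := hD.preimage continuous_snd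
    have h3 : IsClosed {q : Vec m × Vec m | ‖q.1 - q.2‖ ≤ r} :=
      isClosed_le (by fun_prop) continuous_const
    have : K r = {q : Vec m × Vec m | q.1 ∈ C} ∩
        ({q : Vec m × Vec m | q.2 ∈ D} ∩ {q : Vec m × Vec m | ‖q.1 - q.2‖ ≤ r}) := by
      ext q; simp [hK, and_assoc]
    rw [this]
    exact h1.inter (h2.inter h3)
  have hKcomp : ∀ r, IsCompact (K r) := by
    intro r
    refine IsCompact.of_isClosed_subset (hC.prod (hC.cthickening : IsCompact (cthickening r C))) (hKclosed r) ?_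
    rintro q ⟨hq1, hq2, hq3⟩
    refine ⟨hq1, mem_cthickening_of_dist_le q.2 q.1 r C hq1 ?_⟩
    rw [dist_eq_norm, norm_sub_rev]
    exact hq3
  have hfcont : ∀ r, ContinuousOn f (K r) := by
    intro r
    apply ContinuousOn.norm
    exact ((hV.comp continuous_fst.continuousOn (fun q (hq : q ∈ K r) => hCD hq.1)).sub
      (hV.comp continuous_snd.continuousOn (fun q (hq : q ∈ K r) => hq.2.1)))
  have hbdd : ∀ r, BddAbove (f '' K r) := fun r => ((hKcomp r).image_of_continuousOn
    (hfcont r)).bddAbove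
  have hωnonneg : ∀ r, 0 ≤ ω r := by
    intro r
    apply Real.sSup_nonneg
    rintro z ⟨q, hq, rfl⟩
    exact norm_nonneg _
  have hωmono : Monotone ω := by
    intro a b hab
    refine Real.sSup_le ?_ (hωnonneg b)
    rintro z ⟨q, hq, rfl⟩
    exact le_csSup (hbdd b) ⟨q, ⟨hq.1, hq.2.1, hq.2.2.trans hab⟩, rfl⟩
  have hω0 : ω 0 = 0 := by
    refine le_antisymm (Real.sSup_le ?_ le_rfl) (hωnonneg 0)
    rintro z ⟨q, ⟨hq1, hq2, hq3⟩, rfl⟩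
    have hq : q.1 = q.2 := by
      rwa [← sub_eq_zero, ← norm_le_zero_iff]
    simp [hf, hq]
  have hkey : ∀ x ∈ C, ∀ y ∈ D, ‖V x - V y‖ ≤ ω ‖x - y‖ := by
    intro x hx y hy
    exact le_csSup (hbdd _) ⟨(x, y), ⟨hx, hy, le_rfl⟩, rfl⟩
  -- ω tends to 0 at 0⁺
  have hωto0 : ∀ ε > (0:ℝ), ∃ δ > (0:ℝ), ∀ r, r < δ → ω r ≤ ε := by
    intro ε hε
    have hT : IsCompact (D ∩ cthickening 1 C) :=
      IsCompact.of_isClosed_subset hC.cthickening (hD.inter isClosed_cthickening)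
        inter_subset_right
    have hUC := hT.uniformContinuousOn_of_continuous (hV.mono inter_subset_left)
    rw [Metric.uniformContinuousOn_iff] at hUC
    obtain ⟨δ, hδ, hδ'⟩ := hUC ε hε
    refine ⟨min δ 1, lt_min hδ one_pos, fun r hr => ?_⟩
    refine Real.sSup_le ?_ hε.le
    rintro z ⟨q, ⟨hq1, hq2, hq3⟩, rfl⟩
    have hx : q.1 ∈ D ∩ cthickening 1 C := ⟨hCD hq1, self_subset_cthickening _ hq1⟩
    have hy : q.2 ∈ D ∩ cthickening 1 C := by
      refine ⟨hq2, mem_cthickening_of_dist_le q.2 q.1 1 C hq1 ?_⟩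
      rw [dist_eq_norm, norm_sub_rev]
      exact hq3.trans (hr.le.trans (min_le_right _ _))
    have hdq : dist q.1 q.2 < δ := by
      rw [dist_eq_norm]
      exact lt_of_le_of_lt hq3 (hr.trans_le (min_le_left _ _))
    have := hδ' q.1 hx q.2 hy hdq
    rw [dist_eq_norm] at this
    exact this.le
  have hInt : ∀ a b : ℝ, IntervalIntegrable ω volume a b := fun a b =>
    hωmono.intervalIntegrable
  set G : ℝ → ℝ := fun t => ∫ s in (0:ℝ)..t, ω s with hGdef
  have hGcont : Continuous G := intervalIntegral.continuous_primitive hInt 0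
  set F : ℝ → ℝ := fun r => ∫ u in (1:ℝ)..2, ω (r * u) with hFdef
  have hIntF : ∀ r, 0 ≤ r → IntervalIntegrable (fun u => ω (r * u)) volume 1 2 := by
    intro r hr
    exact (hωmono.comp (fun a b hab => mul_le_mul_of_nonneg_left hab hr)).intervalIntegrable
  have hFmono : MonotoneOn F (Ici 0) := by
    intro a ha b hb hab
    refine intervalIntegral.integral_mono_on one_le_two (hIntF a ha) (hIntF b hb) ?_
    intro u hu
    exact hωmono (mul_le_mul_of_nonneg_right hab (le_trans zero_le_one hu.1))
  have hFlb : ∀ r, 0 ≤ r → ω r ≤ F r := by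
    intro r hr
    have : (∫ _ in (1:ℝ)..2, ω r) ≤ F r := by
      refine intervalIntegral.integral_mono_on one_le_two intervalIntegrable_const
        (hIntF r hr) ?_
      intro u hu
      exact hωmono (le_mul_of_one_le_right hr hu.1)
    rw [intervalIntegral.integral_const, smul_eq_mul] at this
    linarith
  have hFub : ∀ r, 0 ≤ r → F r ≤ ω (2 * r) := by
    intro r hr
    have : F r ≤ ∫ _ in (1:ℝ)..2, ω (2 * r) := by
      refine intervalIntegral.integral_mono_on one_le_two (hIntF r hr)
        intervalIntegrable_const ?_
      intro u hu
      rw [mul_comm 2 r]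
      exact hωmono (mul_le_mul_of_nonneg_left hu.2 hr)
    rw [intervalIntegral.integral_const, smul_eq_mul] at this
    linarith
  have hF0 : F 0 = 0 := by
    simp [hFdef, hω0]
  have hFeq : ∀ r : ℝ, 0 < r → F r = r⁻¹ * (G (2 * r) - G r) := by
    intro r hr
    have h1 : F r = r⁻¹ • ∫ s in (r * 1)..(r * 2), ω s :=
      intervalIntegral.integral_comp_mul_left ω hr.ne'
    have h2 : G (2 * r) - G r = ∫ s in r..2 * r, ω s :=
      intervalIntegral.integral_interval_sub_left (hInt 0 (2 * r)) (hInt 0 r)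
    rw [h1, h2, smul_eq_mul, mul_one, mul_comm r 2]
  have hFcont : ContinuousOn F (Ici 0) := by
    intro r hr
    rcases eq_or_lt_of_le (mem_Ici.mp hr) with heq | hpos
    · -- r = 0
      subst heq
      rw [ContinuousWithinAt, hF0]
      have hev1 : ∀ᶠ x in nhdsWithin (0:ℝ) (Ici 0), 0 ≤ F x := by
        filter_upwards [self_mem_nhdsWithin] with x hx
        exact (hωnonneg x).trans (hFlb x hx)
      have hev2 : ∀ᶠ x in nhdsWithin (0:ℝ) (Ici 0), F x ≤ ω (2 * x) := by
        filter_upwards [self_mem_nhdsWithin] with x hx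
        exact hFub x hx
      refine squeeze_zero' hev1 hev2 ?_
      rw [Metric.tendsto_nhdsWithin_nhds]
      intro ε hε
      obtain ⟨δ, hδ, hδ'⟩ := hωto0 (ε / 2) (by positivity)
      refine ⟨δ / 2, by positivity, fun x hx hdx => ?_⟩
      have h2x : 2 * x < δ := by
        rw [Real.dist_eq, sub_zero] at hdx
        have : |x| < δ / 2 := hdx
        nlinarith [abs_nonneg x, le_abs_self x]
      have h1 : ω (2 * x) ≤ ε / 2 := hδ' _ h2x
      rw [Real.dist_eq, sub_zero, abs_of_nonneg (hωnonneg _)]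
      linarith
    · -- r > 0
      have hc : ContinuousAt F r := by
        have heq : F =ᶠ[nhds r] fun t => t⁻¹ * (G (2 * t) - G t) := by
          filter_upwards [isOpen_Ioi.mem_nhds hpos] with t ht
          exact hFeq t ht
        rw [continuousAt_congr heq]
        refine ContinuousAt.mul ?_ ?_
        · exact (continuousAt_inv₀ hpos.ne').comp continuousAt_id
        · exact ((hGcont.comp (continuous_const.mul continuous_id)).continuousAt).sub
            hGcont.continuousAt
      exact hc.continuousWithinAt
  refine ⟨fun r => r + F r, ⟨⟨?_, ?_, ?_, ?_⟩, ?_⟩, ?_⟩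
  · exact continuousOn_id.add hFcont
  · intro a ha b hb hab
    exact add_lt_add_of_lt_of_le hab (hFmono ha hb hab.le)
  · simp [hF0]
  · intro t ht
    exact add_nonneg ht ((hωnonneg t).trans (hFlb t ht))
  · refine tendsto_atTop_mono' atTop ?_ tendsto_id
    filter_upwards [eventually_ge_atTop (0:ℝ)] with r hr
    exact le_add_of_nonneg_right ((hωnonneg r).trans (hFlb r hr))
  · intro x hx y hy
    calc ‖V x - V y‖ ≤ ω ‖x - y‖ := hkey x hx y hy
      _ ≤ F ‖x - y‖ := hFlb _ (norm_nonneg _)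
      _ ≤ ‖x - y‖ + F ‖x - y‖ := le_add_of_nonneg_left (norm_nonneg _)
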